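/- Let V be a finite-dimensional complex vector space and let 𝔤 ⊆ End(V) be a Lie subalgebra. Then the subspace L(𝓡̄(𝔤)) := span_ℂ{R(x,y) : R ∈ 𝓡̄(𝔤), x, y ∈ V} is a Lie ideal of 𝔤, i.e. [A, L(𝓡̄(𝔤))] ⊆ L(𝓡̄(𝔤)) for every A ∈ 𝔤. -/

import Mathlib

/-- A skew-curvature tensor of type `h` (for `h` a subspace of endomorphisms of `V`):
a symmetric bilinear map `R : V × V → End(V)` taking values in `h` and satisfying
the Bianchi identity `R(x,y)z + R(y,z)x + R(z,x)y = 0`. -/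
def IsSkewCurv {V : Type*} [AddCommGroup V] [Module ℂ V]
    (h : Submodule ℂ (Module.End ℂ V)) (R : V →ₗ[ℂ] V →ₗ[ℂ] Module.End ℂ V) : Prop :=
  (∀ x y, R x y = R y x) ∧ (∀ x y, R x y ∈ h) ∧
  (∀ x y z, R x y z + R y z x + R z x y = 0)

attribute [local instance] LieRing.ofAssociativeRing

/-- for a Lie subalgebra `𝔤 ⊆ End(V)` of a finite-dimensional complex
vector space `V`, the span `L(𝓡̄(𝔤))` of the images of all skew-curvature tensors of
type `𝔤` is a Lie ideal of `𝔤`. -/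
theorem stmt0 {V : Type*} [AddCommGroup V] [Module ℂ V] [FiniteDimensional ℂ V]
    (g : LieSubalgebra ℂ (Module.End ℂ V))
    (L : Submodule ℂ (Module.End ℂ V))
    (hL : L = Submodule.span ℂ
      {T | ∃ R : V →ₗ[ℂ] V →ₗ[ℂ] Module.End ℂ V,
        IsSkewCurv g.toSubmodule R ∧ ∃ x y : V, T = R x y}) :
    L ≤ g.toSubmodule ∧ ∀ A ∈ g, ∀ X ∈ L, ⁅A, X⁆ ∈ L := by
  subst hL
  constructor
  · rw [Submodule.span_le]
    rintro T ⟨R, ⟨hsym, hg, hB⟩, x, y, rfl⟩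
    exact hg x y
  · intro A hA X hX
    induction hX using Submodule.span_induction with
    | mem T hT =>
      obtain ⟨R, ⟨hsym, hg, hB⟩, x, y, rfl⟩ := hT
      set S : Set (Module.End ℂ V) :=
        {T | ∃ R : V →ₗ[ℂ] V →ₗ[ℂ] Module.End ℂ V,
          IsSkewCurv g.toSubmodule R ∧ ∃ x y : V, T = R x y} with hS
      -- the "derived" curvature tensor
      let R' : V →ₗ[ℂ] V →ₗ[ℂ] Module.End ℂ V :=
        LinearMap.mk₂ ℂ (fun u v => ⁅A, R u v⁆ - R (A u) v - R u (A v))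
          (by intro u₁ u₂ v; simp [add_lie, lie_add]; abel)
          (by intro c u v; simp [smul_lie, lie_smul, smul_sub])
          (by intro u v₁ v₂; simp [add_lie, lie_add]; abel)
          (by intro c u v; simp [smul_lie, lie_smul, smul_sub])
      have hR' : IsSkewCurv g.toSubmodule R' := by
        refine ⟨?_, ?_, ?_⟩
        · intro u v
          simp only [R', LinearMap.mk₂_apply]
          rw [hsym u v, hsym (A u) v, hsym u (A v)]
          abel
        · intro u v
          simp only [R', LinearMap.mk₂_apply]
          exact sub_mem (sub_mem (g.lie_mem hA (hg u v)) (hg (A u) v)) (hg u (A v))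
        · intro u v w
          have hAsum : A (R u v w) + A (R v w u) + A (R w u v) = 0 := by
            rw [← map_add, ← map_add, hB u v w, map_zero]
          have h1 := hB (A u) v w
          have h2 := hB u (A v) w
          have h3 := hB u v (A w)
          simp only [R', LinearMap.mk₂_apply, LinearMap.sub_apply]
          have hbr : ∀ (B C : Module.End ℂ V) (z : V), ⁅B, C⁆ z = B (C z) - C (B z) := by
            intro B C z
            simp [LieRing.of_associative_ring_bracket, LinearMap.sub_apply, Module.End.mul_apply]
          rw [hbr, hbr, hbr]
          have key :
              (A (R u v w) - R u v (A w) - R (A u) v w - R u (A v) w) +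
              (A (R v w u) - R v w (A u) - R (A v) w u - R v (A w) u) +
              (A (R w u v) - R w u (A v) - R (A w) u v - R w (A u) v) =
              (A (R u v w) + A (R v w u) + A (R w u v))
                - ((R (A u) v w + R v w (A u) + R w (A u) v)
                  + (R u (A v) w + R (A v) w u + R w u (A v))
                  + (R u v (A w) + R v (A w) u + R (A w) u v)) := by abel
          calc (A (R u v w) - R u v (A w) - R (A u) v w - R u (A v) w) +
              (A (R v w u) - R v w (A u) - R (A v) w u - R v (A w) u) +
              (A (R w u v) - R w u (A v) - R (A w) u v - R w (A u) v)
              = _ := key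
            _ = 0 := by rw [hAsum, h1, h2, h3]; simp
      have hmemS : ∀ u v : V, (R' u v : Module.End ℂ V) ∈ Submodule.span ℂ S := by
        intro u v
        exact Submodule.subset_span ⟨R', hR', u, v, rfl⟩
      have hmemR : ∀ u v : V, (R u v : Module.End ℂ V) ∈ Submodule.span ℂ S := by
        intro u v
        exact Submodule.subset_span ⟨R, ⟨hsym, hg, hB⟩, u, v, rfl⟩
      have : ⁅A, R x y⁆ = R' x y + R (A x) y + R x (A y) := by
        simp only [R', LinearMap.mk₂_apply]; abel
      rw [this]
      exact add_mem (add_mem (hmemS x y) (hmemR (A x) y)) (hmemR x (A y))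
    | zero => simp
    | add _ _ _ _ h1 h2 => simpa [lie_add] using add_mem h1 h2
    | smul c _ _ h => simpa [lie_smul] using Submodule.smul_mem _ c h
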